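/- arXiv:2304.10452 — 2 statements merged into one kernel-verified Lean document; each statement's English description precedes it below -/
import Mathlib

section
/- There is no embedding of the root lattice A_12 into the lattice T = D_4^{⊕3} ⊕ U^{⊕2}. -/
open Matrix

/-- Gram matrix of the root lattice `Aₙ` (rank `n`). -/
def Agram (n : ℕ) : Matrix (Fin n) (Fin n) ℤ := fun i j =>
  if i = j then 2
  else if (i : ℤ) - (j : ℤ) = 1 ∨ (j : ℤ) - (i : ℤ) = 1 then -1
  else 0

/-- Gram matrix of the `D₄` root lattice. -/
def D4gram : Matrix (Fin 4) (Fin 4) ℤ :=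
  !![2, -1, 0, 0; -1, 2, -1, -1; 0, -1, 2, 0; 0, -1, 0, 2]

/-- Gram matrix of the hyperbolic plane `U`. -/
def Ugram : Matrix (Fin 2) (Fin 2) ℤ := !![0, 1; 1, 0]

/-- Index type of the lattice `T = D₄^{⊕3} ⊕ U^{⊕2}`. -/
abbrev TIdx := (Fin 3 × Fin 4) ⊕ (Fin 2 × Fin 2)

/-- Gram matrix of `T = D₄^{⊕3} ⊕ U^{⊕2}` (orthogonal direct sum). -/
def Tgram : Matrix TIdx TIdx ℤ := fun a b =>
  match a, b with
  | Sum.inl (i, x), Sum.inl (j, y) => if i = j then D4gram x y else 0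
  | Sum.inr (i, x), Sum.inr (j, y) => if i = j then Ugram x y else 0
  | _, _ => 0

/-- reductions mod 2 -/
def Abar : Matrix (Fin 12) (Fin 12) (ZMod 2) := (Agram 12).map (Int.castRingHom (ZMod 2))
def Tbar : Matrix TIdx TIdx (ZMod 2) := Tgram.map (Int.castRingHom (ZMod 2))

def Binv : Matrix (Fin 12) (Fin 12) (ZMod 2) :=
  !![0, 1, 0, 1, 0, 1, 0, 1, 0, 1, 0, 1;
 1, 0, 0, 0, 0, 0, 0, 0, 0, 0, 0, 0;
 0, 0, 0, 1, 0, 1, 0, 1, 0, 1, 0, 1;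
 1, 0, 1, 0, 0, 0, 0, 0, 0, 0, 0, 0;
 0, 0, 0, 0, 0, 1, 0, 1, 0, 1, 0, 1;
 1, 0, 1, 0, 1, 0, 0, 0, 0, 0, 0, 0;
 0, 0, 0, 0, 0, 0, 0, 1, 0, 1, 0, 1;
 1, 0, 1, 0, 1, 0, 1, 0, 0, 0, 0, 0;
 0, 0, 0, 0, 0, 0, 0, 0, 0, 1, 0, 1;
 1, 0, 1, 0, 1, 0, 1, 0, 1, 0, 0, 0;
 0, 0, 0, 0, 0, 0, 0, 0, 0, 0, 0, 1;
 1, 0, 1, 0, 1, 0, 1, 0, 1, 0, 1, 0]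

lemma Abar_mul_Binv : Abar * Binv = 1 := by decide

def rep : Fin 10 → TIdx :=
  ![Sum.inl (0,0), Sum.inl (0,1), Sum.inl (1,0), Sum.inl (1,1), Sum.inl (2,0),
    Sum.inl (2,1), Sum.inr (0,0), Sum.inr (0,1), Sum.inr (1,0), Sum.inr (1,1)]

def dup : TIdx → Fin 10
  | Sum.inl (i, x) => ⟨2 * i.val + (if x.val = 1 then 1 else 0), by have := i.isLt; split <;> omega⟩
  | Sum.inr (i, x) => ⟨6 + 2 * i.val + x.val, by have := i.isLt; have := x.isLt; omega⟩

def Rsel : Matrix (Fin 10) TIdx (ZMod 2) := fun k j => if dup j = k then 1 else 0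

lemma Tbar_factor : Tbar = Tbar.submatrix id rep * Rsel := by decide

lemma gram_eq (M : Matrix TIdx (Fin 12) ℤ)
    (h : ∀ v w : Fin 12 → ℤ,
      M.mulVec v ⬝ᵥ Tgram.mulVec (M.mulVec w) = v ⬝ᵥ (Agram 12).mulVec w) :
    Mᵀ * Tgram * M = Agram 12 := by
  have key : ∀ v w : Fin 12 → ℤ,
      v ⬝ᵥ (Mᵀ * Tgram * M).mulVec w = v ⬝ᵥ (Agram 12).mulVec w := by
    intro v w
    rw [← mulVec_mulVec, ← mulVec_mulVec, dotProduct_mulVec, vecMul_transpose]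
    exact h v w
  ext i j
  have := key (Pi.single i 1) (Pi.single j 1)
  simpa [mulVec_single_one, single_one_dotProduct] using this

/-- There is no embedding of the root lattice `A₁₂` into `T = D₄^{⊕3} ⊕ U^{⊕2}`. -/
theorem no_embedding_A12_into_T :
    ¬ ∃ f : (Fin 12 → ℤ) →ₗ[ℤ] (TIdx → ℤ),
        Function.Injective f ∧
        ∀ v w : Fin 12 → ℤ, f v ⬝ᵥ Tgram.mulVec (f w) = v ⬝ᵥ (Agram 12).mulVec w := by
  rintro ⟨f, -, hf⟩
  set M : Matrix TIdx (Fin 12) ℤ := LinearMap.toMatrix' f with hM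
  have hfM : ∀ v, f v = M.mulVec v := by
    intro v
    rw [hM, ← Matrix.toLin'_apply, Matrix.toLin'_toMatrix']
  have hgram : Mᵀ * Tgram * M = Agram 12 := by
    apply gram_eq
    intro v w
    rw [← hfM, ← hfM]; exact hf v w
  -- reduce mod 2
  have hbar : (M.map (Int.castRingHom (ZMod 2)))ᵀ * Tbar * M.map (Int.castRingHom (ZMod 2))
      = Abar := by
    rw [Abar, ← hgram, Matrix.map_mul, Matrix.map_mul, Matrix.transpose_map, Tbar]
  -- rank bounds
  have h1 : Abar.rank = 12 := by
    have hu : IsUnit Abar := by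
      have := (Matrix.isUnit_iff_isUnit_det Abar).mpr (Matrix.isUnit_det_of_right_inverse Abar_mul_Binv)
      exact this
    simpa using Abar.rank_of_isUnit hu
  have h2 : Tbar.rank ≤ 10 := by
    rw [Tbar_factor]
    calc (Tbar.submatrix id rep * Rsel).rank ≤ (Tbar.submatrix id rep).rank :=
          Matrix.rank_mul_le_left _ _
      _ ≤ Fintype.card (Fin 10) := Matrix.rank_le_card_width _
      _ = 10 := by simp
  have h3 : Abar.rank ≤ Tbar.rank := by
    rw [← hbar]
    calc ((M.map (Int.castRingHom (ZMod 2)))ᵀ * Tbar * M.map (Int.castRingHom (ZMod 2))).rank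
        ≤ ((M.map (Int.castRingHom (ZMod 2)))ᵀ * Tbar).rank := Matrix.rank_mul_le_left _ _
      _ ≤ Tbar.rank := Matrix.rank_mul_le_right _ _
  omega
end

section
/- Let p be a prime number. Any embedding of the root lattice A_{p-1} into an even lattice L is primitive, i.e., the image of A_{p-1} equals its saturation in L. -/
open Matrix

lemma Agram_transpose (n : ℕ) : (Agram n)ᵀ = Agram n := by
  ext i j
  simp only [Agram, Matrix.transpose_apply, Fin.ext_iff]
  split_ifs <;> omega

lemma sum_ite_cast {n : ℕ} (f : Fin n → ℤ) (c : ℕ) :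
    (∑ k : Fin n, if (k:ℕ) = c then f k else 0) = if h : c < n then f ⟨c,h⟩ else 0 := by
  split_ifs with h
  · rw [Finset.sum_eq_single (⟨c, h⟩ : Fin n)]
    · simp
    · intro k _ hk
      rw [if_neg]
      simpa [Fin.ext_iff] using hk
    · simp
  · apply Finset.sum_eq_zero
    intro k _
    rw [if_neg]
    have := k.isLt
    omega

lemma Agram_mulVec {n : ℕ} (w : Fin n → ℤ) (j : ℕ) (h : j < n) :
    (Agram n).mulVec w ⟨j, h⟩ =
      2 * w ⟨j, h⟩ - (if h0 : 0 < j then w ⟨j - 1, by omega⟩ else 0)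
        - (if h1 : j + 1 < n then w ⟨j + 1, h1⟩ else 0) := by
  have key : ∀ k : Fin n, Agram n ⟨j, h⟩ k * w k =
      (if (k:ℕ) = j then 2 * w k else 0) + (-(if (k:ℕ) = j + 1 then w k else 0))
        + (-(if (k:ℕ) = j - 1 ∧ 0 < j then w k else 0)) := by
    intro k
    simp only [Agram, Fin.ext_iff]
    split_ifs <;> first | ring1 | (exfalso; omega)
  unfold Matrix.mulVec dotProduct
  rw [Finset.sum_congr rfl (fun k _ => key k)]
  rw [Finset.sum_add_distrib, Finset.sum_add_distrib, Finset.sum_neg_distrib, Finset.sum_neg_distrib]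
  rw [sum_ite_cast, sum_ite_cast]
  by_cases h0 : 0 < j
  · have : ∀ k : Fin n, (if (k:ℕ) = j - 1 ∧ 0 < j then w k else 0) = (if (k:ℕ) = j - 1 then w k else 0) := by
      intro k; split_ifs <;> tauto
    rw [Finset.sum_congr rfl (fun k _ => this k), sum_ite_cast]
    rw [dif_pos h, dif_pos h0, dif_pos (by omega : j - 1 < n)]
    split_ifs <;> ring
  · have : ∀ k : Fin n, (if (k:ℕ) = j - 1 ∧ 0 < j then w k else 0) = 0 := by
      intro k; split_ifs <;> tauto
    rw [Finset.sum_congr rfl (fun k _ => this k), Finset.sum_const_zero]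
    rw [dif_pos h, dif_neg h0]
    split_ifs <;> ring

lemma vecMul_Agram {n : ℕ} (v : Fin n → ℤ) :
    Matrix.vecMul v (Agram n) = (Agram n).mulVec v := by
  conv_lhs => rw [← Agram_transpose n]
  rw [Matrix.vecMul_transpose]

lemma core {p q m : ℕ} (hp : p.Prime) (hq : q.Prime)
    (G : Matrix (Fin m) (Fin m) ℤ)
    (f : (Fin (p - 1) → ℤ) →ₗ[ℤ] (Fin m → ℤ))
    (hform : ∀ v w : Fin (p - 1) → ℤ,
      f v ⬝ᵥ G.mulVec (f w) = v ⬝ᵥ (Agram (p - 1)).mulVec w)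
    (x : Fin m → ℤ) (v : Fin (p - 1) → ℤ) (hx : f v = (q : ℤ) • x) :
    ∀ i, (q : ℤ) ∣ v i := by
  have hp2 : 2 ≤ p := hp.two_le
  set V : ℕ → ℤ := fun j => if h : j < p - 1 then v ⟨j, h⟩ else 0 with hV
  -- divisibility of the rows of A v
  have hdiv : ∀ (j : ℕ) (h : j < p - 1), (q : ℤ) ∣ ((Agram (p-1)).mulVec v) ⟨j, h⟩ := by
    intro j h
    have hf := hform v (Pi.single ⟨j, h⟩ 1)
    rw [Matrix.dotProduct_mulVec v (Agram (p-1)), vecMul_Agram, dotProduct_single,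
      mul_one] at hf
    rw [hx, smul_dotProduct, smul_eq_mul] at hf
    exact ⟨x ⬝ᵥ G.mulVec (f (Pi.single ⟨j, h⟩ 1)), hf.symm⟩
  have hrel : ∀ (j : ℕ), j < p - 1 →
      (q : ℤ) ∣ 2 * V j - (if 0 < j then V (j - 1) else 0) - V (j + 1) := by
    intro j h
    have hthis := hdiv j h
    rw [Agram_mulVec v j h] at hthis
    have e : 2 * V j - (if 0 < j then V (j - 1) else 0) - V (j + 1)
        = (2 * v ⟨j, h⟩ - if h0 : 0 < j then v ⟨j - 1, by omega⟩ else 0)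
          - if h1 : j + 1 < p - 1 then v ⟨j + 1, h1⟩ else 0 := by
      simp only [hV]
      rw [dif_pos h]
      by_cases h0 : 0 < j
      · rw [if_pos h0, dif_pos h0, dif_pos (show j - 1 < p - 1 by omega)]
      · rw [if_neg h0, dif_neg h0]
    rw [e]
    exact hthis
  -- the arithmetic-progression property mod q
  have key : ∀ j : ℕ, (j ≤ p - 1 → (q : ℤ) ∣ V j - ((j : ℤ) + 1) * V 0) ∧
      (j + 1 ≤ p - 1 → (q : ℤ) ∣ V (j + 1) - ((j : ℤ) + 2) * V 0) := by
    intro j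
    induction j with
    | zero =>
      refine ⟨fun _ => ?_, fun h1 => ?_⟩
      · simpa using dvd_refl (0 : ℤ)
      · have hd := hrel 0 (by omega)
        rw [if_neg (lt_irrefl 0)] at hd
        have := Int.dvd_neg.mpr hd
        convert this using 1
        push_cast
        ring
    | succ j ih =>
      refine ⟨fun hj => ih.2 hj, fun hj2 => ?_⟩
      have h1 := ih.1 (by omega)
      have h2 := ih.2 (by omega)
      have hd := hrel (j + 1) (by omega)
      rw [if_pos (Nat.succ_pos j), Nat.add_sub_cancel] at hd
      have comb := Int.dvd_sub (Int.dvd_sub (h2.mul_left 2) h1) hd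
      convert comb using 1
      push_cast
      ring
  have hVtop : V (p - 1) = 0 := by
    simp only [hV]
    rw [dif_neg (lt_irrefl _)]
  have hpq : (q : ℤ) ∣ (p : ℤ) * V 0 := by
    have h0 := (key (p - 1)).1 le_rfl
    rw [hVtop] at h0
    have h1 := Int.dvd_neg.mpr h0
    convert h1 using 1
    have e : ((p - 1 : ℕ) : ℤ) = (p : ℤ) - 1 := by omega
    rw [e]; ring
  have hvV : ∀ i : Fin (p - 1), v i = V (i : ℕ) := by
    intro i
    simp only [hV]
    rw [dif_pos i.isLt]
  by_cases hqp : q = p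
  · -- q = p : use the quadratic form value
    subst q
    have hpz : Prime ((p : ℕ) : ℤ) := Nat.prime_iff_prime_int.mp hp
    have hsq : ((p:ℤ) * (p:ℤ)) ∣ v ⬝ᵥ (Agram (p-1)).mulVec v := by
      have hf := hform v v
      rw [hx, Matrix.mulVec_smul, smul_dotProduct, dotProduct_smul,
        smul_eq_mul, smul_eq_mul] at hf
      exact ⟨x ⬝ᵥ G.mulVec x, by rw [← hf]; ring⟩
    set t : ℤ := V 0 with ht
    set u : ℕ → ℤ := fun j => (V j - ((j:ℤ) + 1) * t) / (p:ℤ) with hud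
    have hu : ∀ j : ℕ, j ≤ p - 1 → V j = ((j:ℤ) + 1) * t + (p:ℤ) * u j := by
      intro j hj
      have h0 := Int.mul_ediv_cancel' ((key j).1 hj)
      simp only [hud]
      linarith
    set e' : Fin (p-1) → ℤ := fun i => ((i:ℕ):ℤ) + 1 with he'
    set u' : Fin (p-1) → ℤ := fun i => u (i:ℕ) with hu'
    have hvdec : v = t • e' + (p:ℤ) • u' := by
      funext i
      simp only [Pi.add_apply, Pi.smul_apply, smul_eq_mul, he', hu']
      rw [hvV i, hu (i:ℕ) (by have := i.isLt; omega)]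
      ring
    have hlast : p - 2 < p - 1 := by omega
    have AE : (Agram (p-1)).mulVec e' = Pi.single ⟨p-2, hlast⟩ (p:ℤ) := by
      funext i
      obtain ⟨j, h⟩ := i
      rw [Agram_mulVec e' j h]
      simp only [he', Pi.single_apply, Fin.ext_iff]
      split_ifs <;> omega
    have h1 : e' ⬝ᵥ (Agram (p-1)).mulVec e' = ((p:ℤ) - 1) * (p:ℤ) := by
      rw [AE, dotProduct_single]
      simp only [he']
      have e : ((p - 2 : ℕ) : ℤ) = (p:ℤ) - 2 := by omega
      show (((p - 2 : ℕ) : ℤ) + 1) * (p : ℤ) = _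
      rw [e]; ring
    have h3 : u' ⬝ᵥ (Agram (p-1)).mulVec e' = u (p-2) * (p:ℤ) := by
      rw [AE, dotProduct_single]
    have h4 : e' ⬝ᵥ (Agram (p-1)).mulVec u' = u (p-2) * (p:ℤ) := by
      rw [Matrix.dotProduct_mulVec, vecMul_Agram, AE, single_dotProduct, mul_comm]
    have hQQ : v ⬝ᵥ (Agram (p-1)).mulVec v
        = t * t * (((p:ℤ) - 1) * (p:ℤ))
          + (p:ℤ) * ((p:ℤ) * (2 * (t * u (p-2)) + u' ⬝ᵥ (Agram (p-1)).mulVec u')) := by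
      conv_lhs => rw [hvdec]
      simp only [Matrix.mulVec_add, Matrix.mulVec_smul, dotProduct_add,
        add_dotProduct, dotProduct_smul, smul_dotProduct, smul_eq_mul]
      rw [h1, h3, h4]
      ring
    obtain ⟨c, hc⟩ := hsq
    have hp0 : ((p:ℕ):ℤ) ≠ 0 := by
      simp only [ne_eq, Nat.cast_eq_zero]
      omega
    have hdl : (p:ℤ) ∣ t * t * ((p:ℤ) - 1) := by
      have e : t * t * ((p:ℤ) - 1) * (p:ℤ)
          = (p:ℤ) * (p:ℤ) * (c - (2 * (t * u (p-2)) + u' ⬝ᵥ (Agram (p-1)).mulVec u')) := by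
        linear_combination hc - hQQ
      have hdvd : (p:ℤ) * (p:ℤ) ∣ (t * t * ((p:ℤ) - 1)) * (p:ℤ) := ⟨_, e⟩
      exact (mul_dvd_mul_iff_right hp0).mp hdvd
    have hpt : (p:ℤ) ∣ t := by
      rcases hpz.dvd_mul.mp hdl with h | h
      · exact (hpz.dvd_mul.mp h).elim id id
      · exfalso
        have h2 := Int.le_of_dvd (by omega) h
        omega
    intro i
    rw [hvV i, hu (i:ℕ) (by have := i.isLt; omega)]
    exact dvd_add (hpt.mul_left _) (dvd_mul_right _ _)
  · -- q ≠ p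
    have hqz : Prime ((q : ℕ) : ℤ) := Nat.prime_iff_prime_int.mp hq
    have hq0 : (q : ℤ) ∣ V 0 := by
      rcases hqz.dvd_mul.mp hpq with h | h
      · exact absurd ((Nat.prime_dvd_prime_iff_eq hq hp).mp (Int.natCast_dvd_natCast.mp h)) hqp
      · exact h
    intro i
    rw [hvV i]
    have hk := (key (i : ℕ)).1 (by have := i.isLt; omega)
    have e : V (i : ℕ) = (V (i:ℕ) - (((i:ℕ):ℤ) + 1) * V 0) + (((i:ℕ):ℤ) + 1) * V 0 := by ring
    rw [e]
    exact dvd_add hk (hq0.mul_left _)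

/-- For a prime `p`, any embedding of the root lattice `A_{p-1}` into an even
(nondegenerate, symmetric) lattice `L` is primitive: the image of `A_{p-1}` equals
its saturation in `L`, i.e. any `x ∈ L` with `k • x` in the image for some `k ≠ 0`
already lies in the image. -/
theorem embedding_of_A_p_sub_one_is_primitive
    (p : ℕ) (hp : p.Prime) (m : ℕ) (G : Matrix (Fin m) (Fin m) ℤ)
    (hsymm : G.IsSymm)
    (hnd : (G.map (Int.cast : ℤ → ℚ)).det ≠ 0)
    (heven : ∀ v : Fin m → ℤ, Even (v ⬝ᵥ G.mulVec v))
    (f : (Fin (p - 1) → ℤ) →ₗ[ℤ] (Fin m → ℤ))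
    (hinj : Function.Injective f)
    (hform : ∀ v w : Fin (p - 1) → ℤ,
      f v ⬝ᵥ G.mulVec (f w) = v ⬝ᵥ (Agram (p - 1)).mulVec w) :
    ∀ x : Fin m → ℤ, (∃ k : ℤ, k ≠ 0 ∧ k • x ∈ LinearMap.range f) →
      x ∈ LinearMap.range f := by
  suffices H : ∀ N : ℕ, ∀ (k : ℤ) (x : Fin m → ℤ) (v : Fin (p - 1) → ℤ),
      k.natAbs ≤ N → k ≠ 0 → f v = k • x → x ∈ LinearMap.range f by
    rintro x ⟨k, hk, v, hv⟩
    exact H k.natAbs k x v le_rfl hk hv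
  intro N
  induction N with
  | zero =>
    intro k x v h hk _
    exact absurd (Int.natAbs_eq_zero.mp (Nat.le_zero.mp h)) hk
  | succ N ih =>
    intro k x v hN hk hfv
    by_cases h1 : k.natAbs = 1
    · refine ⟨k • v, ?_⟩
      have hkk : k * k = 1 := by
        rcases Int.natAbs_eq_iff.mp h1 with h | h <;> rw [h] <;> ring
      rw [LinearMap.map_smul, hfv, smul_smul, hkk, one_smul]
    · have hknz : k.natAbs ≠ 0 := fun h => hk (Int.natAbs_eq_zero.mp h)
      set q := k.natAbs.minFac with hqdef
      have hqp : q.Prime := Nat.minFac_prime h1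
      have hq2 : 2 ≤ q := hqp.two_le
      have hqdvd : (q:ℤ) ∣ k := by
        have h0 : (q:ℤ) ∣ (k.natAbs : ℤ) := Int.natCast_dvd_natCast.mpr (Nat.minFac_dvd _)
        exact h0.trans (Int.natAbs_dvd.mpr dvd_rfl)
      obtain ⟨k', hk'⟩ := hqdvd
      have hfv' : f v = (q:ℤ) • (k' • x) := by rw [hfv, hk', mul_smul]
      have hdiv := core hp hqp G f hform (k' • x) v hfv'
      set v' : Fin (p - 1) → ℤ := fun i => v i / (q:ℤ) with hv'def
      have hq0 : (q:ℤ) ≠ 0 := by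
        simp only [ne_eq, Nat.cast_eq_zero]
        omega
      have hvv : v = (q:ℤ) • v' := by
        funext i
        simp only [hv'def, Pi.smul_apply, smul_eq_mul]
        exact (Int.mul_ediv_cancel' (hdiv i)).symm
      have hfv'' : f v' = k' • x := by
        have h0 : (q:ℤ) • f v' = (q:ℤ) • (k' • x) := by
          rw [← LinearMap.map_smul, ← hvv, hfv']
        exact smul_right_injective (Fin m → ℤ) hq0 h0
      have hk'nz : k' ≠ 0 := by
        intro h; rw [h, mul_zero] at hk'; exact hk hk'
      refine ih k' x v' ?_ hk'nz hfv''
      have e : k.natAbs = q * k'.natAbs := by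
        rw [hk', Int.natAbs_mul, Int.natAbs_natCast]
      have h2 : 1 ≤ k'.natAbs := Nat.one_le_iff_ne_zero.mpr
        (fun h => hk'nz (Int.natAbs_eq_zero.mp h))
      have h3 : 1 * k'.natAbs < q * k'.natAbs :=
        Nat.mul_lt_mul_of_lt_of_le (by omega) le_rfl (by omega)
      omega
end
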